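/- Let k and ℓ be positive integers, and let G = (V,E) be a graph on more than k vertices in which every vertex subset S ⊆ V of size |S| = k satisfies |N_G(S)| ≥ ℓ. Then G contains a path with ℓ edges. -/
import Mathlib


open scoped Classical

/-- The external neighborhood of a vertex set `U` in a simple graph `G`:
all vertices outside `U` having a neighbor in `U`. -/
def SimpleGraph.extNb {V : Type*} (G : SimpleGraph V) (U : Set V) : Set V :=
  {v | v ∉ U ∧ ∃ u ∈ U, G.Adj u v}

/-- A graph `G` on `n` vertices is an `α`-expander if every vertex subset `U` with
`|U| ≤ n/2` satisfies `|N_G(U)| ≥ α |U|`. -/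
def SimpleGraph.IsExpander {V : Type*} [Fintype V] (G : SimpleGraph V) (α : ℝ) : Prop :=
  ∀ U : Set V, (U.ncard : ℝ) ≤ (Fintype.card V : ℝ) / 2 →
    α * U.ncard ≤ ((G.extNb U).ncard : ℝ)

/-- `G` is a `(k, α)`-expander if every vertex subset `U` with `|U| ≤ k`
satisfies `|N_G(U)| ≥ α |U|`. -/
def SimpleGraph.IsKExpander {V : Type*} (G : SimpleGraph V) (k α : ℝ) : Prop :=
  ∀ U : Set V, (U.ncard : ℝ) ≤ k → α * U.ncard ≤ ((G.extNb U).ncard : ℝ)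

/-- From a path of length at least `m`, extract a path of length exactly `m`. -/
lemma exists_path_len {V : Type*} {G : SimpleGraph V} {u w : V} (p : G.Walk u w)
    (hp : p.IsPath) : ∀ m ≤ p.length,
    ∃ (x y : V) (q : G.Walk x y), q.IsPath ∧ q.length = m := by
  induction p with
  | nil =>
    intro m hm
    simp only [SimpleGraph.Walk.length_nil, Nat.le_zero] at hm
    exact ⟨_, _, SimpleGraph.Walk.nil, hp, by simp [hm]⟩
  | cons h p ih =>
    intro m hm
    rcases Nat.lt_or_ge m (p.length + 1) with hlt | hge
    · exact ih hp.of_cons m (Nat.lt_succ_iff.mp hlt)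
    · have hme : m = p.length + 1 := le_antisymm (by simpa using hm) hge
      exact ⟨_, _, _, hp, by simp [hme]⟩

/-- DFS induction: from any valid DFS state (finished set `T`, stack being a path `q`
with top `a`), we find a path of length at least `ℓ`. -/
lemma dfs_aux {V : Type*} [Fintype V] [DecidableEq V] (G : SimpleGraph V) (k ℓ : ℕ)
    (hℓ : 0 < ℓ) (hn : k < Fintype.card V)
    (h : ∀ S : Set V, S.ncard = k → ℓ ≤ (G.extNb S).ncard) :
    ∀ n (T : Finset V) (a b : V) (q : G.Walk a b), q.IsPath →
      (∀ t ∈ T, t ∉ q.support) →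
      (∀ t ∈ T, ∀ v, G.Adj t v → v ∈ T ∨ v ∈ q.support) →
      T.card < k →
      2 * Fintype.card V ≤ 2 * T.card + q.length + n →
      ∃ (x y : V) (p : G.Walk x y), p.IsPath ∧ ℓ ≤ p.length := by
  intro n
  induction n with
  | zero =>
    intro T a b q hp hdisj hcl hTk hμ
    exfalso
    -- |T| + (q.length + 1) ≤ card V, contradicting the measure bound.
    have hnodup : q.support.Nodup := hp.support_nodup
    have hdisj' : Disjoint T q.support.toFinset := by
      rw [Finset.disjoint_left]
      intro t ht ht'
      exact hdisj t ht (List.mem_toFinset.mp ht')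
    have hcard : (T ∪ q.support.toFinset).card = T.card + (q.length + 1) := by
      rw [Finset.card_union_of_disjoint hdisj', List.toFinset_card_of_nodup hnodup,
        SimpleGraph.Walk.length_support]
    have hle : (T ∪ q.support.toFinset).card ≤ Fintype.card V := Finset.card_le_univ _
    omega
  | succ n ih =>
    intro T a b q hp hdisj hcl hTk hμ
    by_cases hpush : ∃ v, G.Adj a v ∧ v ∉ T ∧ v ∉ q.support
    · -- push a new vertex on the stack
      obtain ⟨v, hadj, hvT, hvS⟩ := hpush
      refine ih T v b (SimpleGraph.Walk.cons hadj.symm q) (hp.cons hvS) ?_ ?_ hTk ?_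
      · intro t ht
        simp only [SimpleGraph.Walk.support_cons, List.mem_cons]
        rintro (rfl | hts)
        · exact hvT ht
        · exact hdisj t ht hts
      · intro t ht w hw
        rcases hcl t ht w hw with h1 | h1
        · exact Or.inl h1
        · exact Or.inr (by simp [SimpleGraph.Walk.support_cons, h1])
      · simp only [SimpleGraph.Walk.length_cons]; omega
    · push_neg at hpush
      have hpush' : ∀ w, G.Adj a w → w ∈ T ∨ w ∈ q.support := fun w hw =>
        or_iff_not_imp_left.mpr (hpush w hw)
      clear hpush
      -- pop the top vertex `a` into `T`
      have haT : a ∉ T := fun ha => hdisj a ha q.start_mem_support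
      have hcard' : (insert a T).card = T.card + 1 := Finset.card_insert_of_notMem haT
      cases q with
      | nil =>
        by_cases hTk' : T.card + 1 = k
        · -- the external neighborhood of `insert a T` is empty: contradiction
          exfalso
          have hkcard : ((↑(insert a T) : Set V)).ncard = k := by
            rw [Set.ncard_coe_finset, hcard', hTk']
          have hemp : G.extNb (↑(insert a T) : Set V) = ∅ := by
            ext w
            simp only [SimpleGraph.extNb, Set.mem_setOf_eq, Set.mem_empty_iff_false,
              iff_false, not_and]
            intro hwmem
            rintro ⟨u, hu, hadj⟩
            have hmem : w ∈ T ∨ w ∈ (SimpleGraph.Walk.nil : G.Walk a a).support := by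
              rcases Finset.mem_insert.mp (by exact_mod_cast hu) with h1 | huT
              · exact hpush' w (h1 ▸ hadj)
              · exact hcl u huT w hadj
            have hwins : w ∈ insert a T := by
              rcases hmem with h1 | h1
              · exact Finset.mem_insert_of_mem h1
              · simp only [SimpleGraph.Walk.support_nil, List.mem_singleton] at h1
                rw [h1]; exact Finset.mem_insert_self a T
            exact hwmem (by exact_mod_cast hwins)
          have := h _ hkcard
          rw [hemp, Set.ncard_empty] at this
          omega
        · -- restart: pick a fresh root
          have hlt : (insert a T).card < Fintype.card V := by omega
          have : ∃ v, v ∉ insert a T := by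
            by_contra hc
            push_neg at hc
            have : (insert a T) = Finset.univ := Finset.eq_univ_iff_forall.mpr hc
            rw [this] at hlt
            simp at hlt
          obtain ⟨v, hv⟩ := this
          refine ih (insert a T) v v SimpleGraph.Walk.nil SimpleGraph.Walk.IsPath.nil
            ?_ ?_ (by omega) ?_
          · intro t ht
            simp only [SimpleGraph.Walk.support_nil, List.mem_singleton]
            rintro rfl
            exact hv ht
          · intro t ht w hw
            have hmem : w ∈ T ∨ w ∈ (SimpleGraph.Walk.nil : G.Walk a a).support := by
              rcases Finset.mem_insert.mp ht with h1 | htT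
              · exact hpush' w (h1 ▸ hw)
              · exact hcl t htT w hw
            rcases hmem with h1 | h1
            · exact Or.inl (Finset.mem_insert_of_mem h1)
            · simp only [SimpleGraph.Walk.support_nil, List.mem_singleton] at h1
              exact Or.inl (by rw [h1]; exact Finset.mem_insert_self a T)
          · simp only [SimpleGraph.Walk.length_nil, SimpleGraph.Walk.length_nil] at hμ ⊢
            omega
      | @cons _ c _ hadj q' =>
        have hnotsup : a ∉ q'.support := by
          have := hp.support_nodup
          rw [SimpleGraph.Walk.support_cons] at this
          exact (List.nodup_cons.mp this).1
        by_cases hTk' : T.card + 1 = k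
        · -- done: the whole current path has length ≥ ℓ
          refine ⟨a, b, SimpleGraph.Walk.cons hadj q', hp, ?_⟩
          have hkcard : ((↑(insert a T) : Set V)).ncard = k := by
            rw [Set.ncard_coe_finset, hcard', hTk']
          have hsub : G.extNb (↑(insert a T) : Set V) ⊆ {x | x ∈ q'.support} := by
            rintro w ⟨hwmem, u, hu, huw⟩
            have hmem : w ∈ T ∨ w ∈ (SimpleGraph.Walk.cons hadj q').support := by
              rcases Finset.mem_insert.mp (by exact_mod_cast hu) with h1 | huT
              · exact hpush' w (h1 ▸ huw)
              · exact hcl u huT w huw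
            have hwT' : w ∉ insert a T := by exact_mod_cast hwmem
            rcases hmem with h1 | h1
            · exact absurd (Finset.mem_insert_of_mem h1) hwT'
            · rw [SimpleGraph.Walk.support_cons, List.mem_cons] at h1
              rcases h1 with rfl | h1
              · exact absurd (Finset.mem_insert_self w T) hwT'
              · exact h1
          have hfin : ({x | x ∈ q'.support} : Set V).Finite := Set.toFinite _
          have h1 : ℓ ≤ ({x | x ∈ q'.support} : Set V).ncard :=
            le_trans (h _ hkcard) (Set.ncard_le_ncard hsub hfin)
          have h2 : ({x | x ∈ q'.support} : Set V).ncard = q'.length + 1 := by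
            rw [← List.coe_toFinset, Set.ncard_coe_finset,
              List.toFinset_card_of_nodup hp.of_cons.support_nodup,
              SimpleGraph.Walk.length_support]
          rw [h2] at h1
          simp only [SimpleGraph.Walk.length_cons]
          omega
        · -- pop and continue
          refine ih (insert a T) c b q' hp.of_cons ?_ ?_ (by omega) ?_
          · intro t ht
            rcases Finset.mem_insert.mp ht with rfl | htT
            · exact hnotsup
            · intro hts
              exact hdisj t htT (by rw [SimpleGraph.Walk.support_cons]; exact List.mem_cons_of_mem _ hts)
          · intro t ht w hw
            have hmem : w ∈ T ∨ w ∈ (SimpleGraph.Walk.cons hadj q').support := by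
              rcases Finset.mem_insert.mp ht with h1 | htT
              · exact hpush' w (h1 ▸ hw)
              · exact hcl t htT w hw
            rcases hmem with h1 | h1
            · exact Or.inl (Finset.mem_insert_of_mem h1)
            · rw [SimpleGraph.Walk.support_cons, List.mem_cons] at h1
              rcases h1 with rfl | h1
              · exact Or.inl (Finset.mem_insert_self _ _)
              · exact Or.inr h1
          · simp only [SimpleGraph.Walk.length_cons] at hμ
            omega

theorem stmt_10 {V : Type*} [Fintype V] (G : SimpleGraph V) (k ℓ : ℕ)
    (hk : 0 < k) (hℓ : 0 < ℓ) (hn : k < Fintype.card V)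
    (h : ∀ S : Set V, S.ncard = k → ℓ ≤ (G.extNb S).ncard) :
    ∃ (u w : V) (p : G.Walk u w), p.IsPath ∧ p.length = ℓ := by
  classical
  have hpos : 0 < Fintype.card V := lt_trans hk hn
  obtain ⟨v⟩ := Fintype.card_pos_iff.mp hpos
  obtain ⟨x, y, p, hp, hlen⟩ :=
    dfs_aux G k ℓ hℓ hn h (2 * Fintype.card V) ∅ v v SimpleGraph.Walk.nil
      SimpleGraph.Walk.IsPath.nil (by simp) (by simp) hk (by simp)
  exact exists_path_len p hp ℓ hlen
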